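/- Suppose r₁ = r₃ = p and r₂ = r₄ = q with p > 5q > 0. Then G has exactly 3 critical points in the open square S, namely (0,0), (a,−a) and (−a,a), where a = √(1 − 4q/(p−q)). -/

import Mathlib

noncomputable section

/-- `K = r₁ + r₃ − r₂ − r₄`. -/
def Kq (r₁ r₂ r₃ r₄ : ℝ) : ℝ := r₁ + r₃ - r₂ - r₄

/-- `N(a₁,a₂) = a₁a₂K + a₁(K+2(r₂−r₃)) + a₂(K+2(r₄−r₃)) + K + 2(r₂+r₄)`. -/
def Nq (r₁ r₂ r₃ r₄ a₁ a₂ : ℝ) : ℝ :=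
  a₁ * a₂ * Kq r₁ r₂ r₃ r₄ + a₁ * (Kq r₁ r₂ r₃ r₄ + 2 * (r₂ - r₃)) +
    a₂ * (Kq r₁ r₂ r₃ r₄ + 2 * (r₄ - r₃)) + Kq r₁ r₂ r₃ r₄ + 2 * (r₂ + r₄)

/-- `P(a₁,a₂) = 3(1−a₁²)·∂N/∂a₁ + 2a₁·N`, where `∂N/∂a₁ = a₂K + K + 2(r₂−r₃)`. -/
def Pq (r₁ r₂ r₃ r₄ a₁ a₂ : ℝ) : ℝ :=
  3 * (1 - a₁ ^ 2) * (a₂ * Kq r₁ r₂ r₃ r₄ + (Kq r₁ r₂ r₃ r₄ + 2 * (r₂ - r₃))) +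
    2 * a₁ * Nq r₁ r₂ r₃ r₄ a₁ a₂

/-- `Q(a₁,a₂) = 3(1−a₂²)·∂N/∂a₂ + 2a₂·N`, where `∂N/∂a₂ = a₁K + K + 2(r₄−r₃)`. -/
def Qq (r₁ r₂ r₃ r₄ a₁ a₂ : ℝ) : ℝ :=
  3 * (1 - a₂ ^ 2) * (a₁ * Kq r₁ r₂ r₃ r₄ + (Kq r₁ r₂ r₃ r₄ + 2 * (r₄ - r₃))) +
    2 * a₂ * Nq r₁ r₂ r₃ r₄ a₁ a₂

/-- The open square `S = {(a₁,a₂) : |a₁| < 1, |a₂| < 1}`. -/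
def Sq : Set (ℝ × ℝ) := {a | |a.1| < 1 ∧ |a.2| < 1}

/-- `G(a₁,a₂) = N(a₁,a₂)³ / ((1−a₁²)(1−a₂²))` on `S`. -/
def Gq (r₁ r₂ r₃ r₄ : ℝ) (a : ℝ × ℝ) : ℝ :=
  Nq r₁ r₂ r₃ r₄ a.1 a.2 ^ 3 / ((1 - a.1 ^ 2) * (1 - a.2 ^ 2))

lemma hasFDerivAt_N (r₁ r₂ r₃ r₄ : ℝ) (a : ℝ × ℝ) :
    HasFDerivAt (fun x : ℝ × ℝ => Nq r₁ r₂ r₃ r₄ x.1 x.2)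
      ((a.2 * Kq r₁ r₂ r₃ r₄ + (Kq r₁ r₂ r₃ r₄ + 2 * (r₂ - r₃))) • ContinuousLinearMap.fst ℝ ℝ ℝ
        + (a.1 * Kq r₁ r₂ r₃ r₄ + (Kq r₁ r₂ r₃ r₄ + 2 * (r₄ - r₃))) • ContinuousLinearMap.snd ℝ ℝ ℝ) a := by
  have h1 : HasFDerivAt (fun x : ℝ × ℝ => x.1) (ContinuousLinearMap.fst ℝ ℝ ℝ) a := hasFDerivAt_fst
  have h2 : HasFDerivAt (fun x : ℝ × ℝ => x.2) (ContinuousLinearMap.snd ℝ ℝ ℝ) a := hasFDerivAt_snd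
  have H := ((((((h1.mul h2).mul_const (Kq r₁ r₂ r₃ r₄)).add
      (h1.mul_const (Kq r₁ r₂ r₃ r₄ + 2 * (r₂ - r₃)))).add
      (h2.mul_const (Kq r₁ r₂ r₃ r₄ + 2 * (r₄ - r₃)))).add_const (Kq r₁ r₂ r₃ r₄)).add_const
      (2 * (r₂ + r₄)))
  refine H.congr_fderiv ?_
  refine ContinuousLinearMap.ext fun v => ?_
  simp [Nq]
  ring

lemma hasFDerivAt_G (r₁ r₂ r₃ r₄ : ℝ) (a : ℝ × ℝ) (h1 : (1:ℝ) - a.1 ^ 2 ≠ 0)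
    (h2 : (1:ℝ) - a.2 ^ 2 ≠ 0) :
    HasFDerivAt (Gq r₁ r₂ r₃ r₄)
      ((Nq r₁ r₂ r₃ r₄ a.1 a.2 ^ 2 * Pq r₁ r₂ r₃ r₄ a.1 a.2 /
          ((1 - a.1 ^ 2) ^ 2 * (1 - a.2 ^ 2))) • ContinuousLinearMap.fst ℝ ℝ ℝ
        + (Nq r₁ r₂ r₃ r₄ a.1 a.2 ^ 2 * Qq r₁ r₂ r₃ r₄ a.1 a.2 /
          ((1 - a.1 ^ 2) * (1 - a.2 ^ 2) ^ 2)) • ContinuousLinearMap.snd ℝ ℝ ℝ) a := by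
  have h1' : HasFDerivAt (fun x : ℝ × ℝ => x.1) (ContinuousLinearMap.fst ℝ ℝ ℝ) a := hasFDerivAt_fst
  have h2' : HasFDerivAt (fun x : ℝ × ℝ => x.2) (ContinuousLinearMap.snd ℝ ℝ ℝ) a := hasFDerivAt_snd
  have hGq : Gq r₁ r₂ r₃ r₄ = fun x : ℝ × ℝ =>
      (Nq r₁ r₂ r₃ r₄ x.1 x.2 * Nq r₁ r₂ r₃ r₄ x.1 x.2 * Nq r₁ r₂ r₃ r₄ x.1 x.2) *
        ((1 - x.1 * x.1) * (1 - x.2 * x.2))⁻¹ := by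
    funext x; simp only [Gq, div_eq_mul_inv]; ring_nf
  have hN := hasFDerivAt_N r₁ r₂ r₃ r₄ a
  have hnum := (hN.mul hN).mul hN
  have hden := ((hasFDerivAt_const (1:ℝ) a).sub (h1'.mul h1')).mul
    ((hasFDerivAt_const (1:ℝ) a).sub (h2'.mul h2'))
  have hd : (1 - a.1 * a.1) * (1 - a.2 * a.2) ≠ 0 := by
    have e1 : (1:ℝ) - a.1 * a.1 = 1 - a.1 ^ 2 := by ring
    have e2 : (1:ℝ) - a.2 * a.2 = 1 - a.2 ^ 2 := by ring
    rw [e1, e2]; exact mul_ne_zero h1 h2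
  have hinv := (hasFDerivAt_inv' (𝕜 := ℝ) hd).comp a hden
  have H := hnum.mul hinv
  rw [hGq]
  refine H.congr_fderiv ?_
  have h1'' : (1:ℝ) - a.1 * a.1 ≠ 0 := by
    intro h; apply h1; rw [← h]; ring
  have h2'' : (1:ℝ) - a.2 * a.2 ≠ 0 := by
    intro h; apply h2; rw [← h]; ring
  refine ContinuousLinearMap.ext fun v => ?_
  simp only [Pi.mul_apply, Pi.sub_apply, Function.comp_apply]
  simp only [ContinuousLinearMap.add_apply, ContinuousLinearMap.smul_apply,
    ContinuousLinearMap.coe_fst', ContinuousLinearMap.coe_snd',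
    ContinuousLinearMap.comp_apply, ContinuousLinearMap.neg_apply,
    ContinuousLinearMap.mulLeftRight_apply, ContinuousLinearMap.sub_apply,
    ContinuousLinearMap.zero_apply, Function.comp_apply, smul_eq_mul, Pq, Qq,
    zero_sub, neg_add_rev, mul_neg, neg_neg, neg_mul]
  field_simp
  ring

lemma fderiv_G_eq_zero_iff (r₁ r₂ r₃ r₄ : ℝ) (a : ℝ × ℝ) (h1 : |a.1| < 1) (h2 : |a.2| < 1)
    (hN : Nq r₁ r₂ r₃ r₄ a.1 a.2 ≠ 0) :
    fderiv ℝ (Gq r₁ r₂ r₃ r₄) a = 0 ↔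
      Pq r₁ r₂ r₃ r₄ a.1 a.2 = 0 ∧ Qq r₁ r₂ r₃ r₄ a.1 a.2 = 0 := by
  have hs1 : a.1 ^ 2 < 1 := by nlinarith [abs_nonneg a.1, sq_abs a.1, abs_nonneg a.2, sq_abs a.2]
  have hs2 : a.2 ^ 2 < 1 := by nlinarith [abs_nonneg a.1, sq_abs a.1, abs_nonneg a.2, sq_abs a.2]
  have h1' : (1:ℝ) - a.1 ^ 2 ≠ 0 := by nlinarith
  have h2' : (1:ℝ) - a.2 ^ 2 ≠ 0 := by nlinarith
  have hF := (hasFDerivAt_G r₁ r₂ r₃ r₄ a h1' h2').fderiv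
  rw [hF]
  constructor
  · intro h
    have e1 := congrArg (fun L : ℝ × ℝ →L[ℝ] ℝ => L (1, 0)) h
    have e2 := congrArg (fun L : ℝ × ℝ →L[ℝ] ℝ => L (0, 1)) h
    simp only [ContinuousLinearMap.add_apply, ContinuousLinearMap.smul_apply,
      ContinuousLinearMap.coe_fst', ContinuousLinearMap.coe_snd', smul_eq_mul,
      ContinuousLinearMap.zero_apply, mul_one, mul_zero, add_zero, zero_add] at e1 e2
    have hd1 : (1 - a.1 ^ 2) ^ 2 * (1 - a.2 ^ 2) ≠ 0 := by positivity
    have hd2 : (1 - a.1 ^ 2) * (1 - a.2 ^ 2) ^ 2 ≠ 0 := by positivity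
    have hN2 : Nq r₁ r₂ r₃ r₄ a.1 a.2 ^ 2 ≠ 0 := pow_ne_zero _ hN
    constructor
    · rcases mul_eq_zero.1 ((div_eq_zero_iff.1 e1).resolve_right hd1) with h' | h'
      · exact absurd h' hN2
      · exact h'
    · rcases mul_eq_zero.1 ((div_eq_zero_iff.1 e2).resolve_right hd2) with h' | h'
      · exact absurd h' hN2
      · exact h'
  · rintro ⟨hP, hQ⟩
    rw [hP, hQ]
    simp

lemma Npq (p q x y : ℝ) : Nq p q p q x y = 2 * (p - q) * (1 + x * y) + 4 * q := by
  simp only [Nq, Kq]; ring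

lemma Ppq (p q x y : ℝ) :
    Pq p q p q x y = 2 * (p - q) * (3 * y - x ^ 2 * y + 2 * x) + 8 * q * x := by
  simp only [Pq, Nq, Kq]; ring

lemma Qpq (p q x y : ℝ) :
    Qq p q p q x y = 2 * (p - q) * (3 * x - y ^ 2 * x + 2 * y) + 8 * q * y := by
  simp only [Qq, Nq, Kq]; ring

/-- For `r₁ = r₃ = p`, `r₂ = r₄ = q` with `p > 5q > 0`, the function `G`
has exactly `3` critical points in the open square `S`, namely `(0,0)`, `(a,−a)` and
`(−a,a)`, where `a = √(1 − 4q/(p−q))`. -/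
theorem stmt17 (p q : ℝ) (hq : 0 < q) (hpq : 5 * q < p) :
    {a ∈ Sq | fderiv ℝ (Gq p q p q) a = 0} =
        {((0 : ℝ), (0 : ℝ)),
          (Real.sqrt (1 - 4 * q / (p - q)), -Real.sqrt (1 - 4 * q / (p - q))),
          (-Real.sqrt (1 - 4 * q / (p - q)), Real.sqrt (1 - 4 * q / (p - q)))} ∧
      {a ∈ Sq | fderiv ℝ (Gq p q p q) a = 0}.ncard = 3 := by
  set A := Real.sqrt (1 - 4 * q / (p - q)) with hA
  have hpq' : (0:ℝ) < p - q := by linarith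
  have hs0 : (0:ℝ) < 1 - 4 * q / (p - q) := by
    rw [sub_pos, div_lt_one hpq']; linarith
  have hs1 : 1 - 4 * q / (p - q) < 1 := by
    have : 0 < 4 * q / (p - q) := by positivity
    linarith
  have hA2 : A ^ 2 = 1 - 4 * q / (p - q) := Real.sq_sqrt hs0.le
  have hA0 : 0 < A := Real.sqrt_pos.2 hs0
  have hA1 : A < 1 := by
    nlinarith [Real.sqrt_nonneg (1 - 4 * q / (p - q)), hA2, hs1]
  have key : (p - q) * A ^ 2 = p - 5 * q := by
    rw [hA2]; field_simp; ring
  -- characterization of critical points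
  have main : ∀ x y : ℝ, |x| < 1 → |y| < 1 →
      (fderiv ℝ (Gq p q p q) (x, y) = 0 ↔
        (x = 0 ∧ y = 0) ∨ (x = A ∧ y = -A) ∨ (x = -A ∧ y = A)) := by
    intro x y hx hy
    have hxy : x * y < 1 := by
      nlinarith [abs_nonneg x, abs_nonneg y, le_abs_self (x * y), abs_mul x y]
    have hxy' : -1 < x * y := by
      nlinarith [abs_nonneg x, abs_nonneg y, neg_abs_le (x * y), abs_mul x y]
    have hN : Nq p q p q x y ≠ 0 := by
      rw [Npq]; nlinarith
    rw [fderiv_G_eq_zero_iff p q p q (x, y) hx hy hN]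
    simp only [Ppq, Qpq]
    constructor
    · rintro ⟨hP, hQ⟩
      have hsum : (x + y) * (2 * (p - q) * (5 - x * y) + 8 * q) = 0 := by
        linear_combination hP + hQ
      have hpos : 0 < 2 * (p - q) * (5 - x * y) + 8 * q := by nlinarith
      have hxy0 : y = -x := by
        have := (mul_eq_zero.1 hsum).resolve_right hpos.ne'
        linarith
      subst hxy0
      have hdiff : 2 * x * (8 * q - 2 * (p - q) * (1 - x ^ 2)) = 0 := by
        linear_combination hP - hQ
      rcases mul_eq_zero.1 hdiff with h | h
      · have : x = 0 := by linarith
        exact Or.inl ⟨this, by rw [this]; ring⟩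
      · have hx2 : (p - q) * x ^ 2 = p - 5 * q := by linarith
        have : (x - A) * (x + A) = 0 := by
          have : (p - q) * ((x - A) * (x + A)) = 0 := by
            linear_combination hx2 - key
          exact (mul_eq_zero.1 this).resolve_left hpq'.ne'
        rcases mul_eq_zero.1 this with h' | h'
        · exact Or.inr (Or.inl ⟨by linarith, by linarith⟩)
        · exact Or.inr (Or.inr ⟨by linarith, by linarith⟩)
    · rintro (⟨rfl, rfl⟩ | ⟨rfl, rfl⟩ | ⟨rfl, rfl⟩)
      · constructor <;> ring
      · constructor
        · linear_combination 2 * A * key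
        · linear_combination (-2 * A) * key
      · constructor
        · linear_combination (-2 * A) * key
        · linear_combination 2 * A * key
  have hseteq : {a ∈ Sq | fderiv ℝ (Gq p q p q) a = 0} =
      {((0 : ℝ), (0 : ℝ)), (A, -A), (-A, A)} := by
    ext ⟨x, y⟩
    simp only [Set.mem_setOf_eq, Sq, Set.mem_insert_iff, Set.mem_singleton_iff, Prod.mk.injEq]
    constructor
    · rintro ⟨⟨hx, hy⟩, hcrit⟩
      exact (main x y hx hy).1 hcrit
    · intro h
      have hmem : |x| < 1 ∧ |y| < 1 := by
        rcases h with ⟨rfl, rfl⟩ | ⟨rfl, rfl⟩ | ⟨rfl, rfl⟩ <;>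
          constructor <;> simp [abs_of_pos hA0, abs_neg] <;>
            first
              | exact hA1
              | norm_num
      exact ⟨hmem, (main x y hmem.1 hmem.2).2 h⟩
  refine ⟨hseteq, ?_⟩
  rw [hseteq]
  have hne1 : ((0 : ℝ), (0 : ℝ)) ∉ ({(A, -A), (-A, A)} : Set (ℝ × ℝ)) := by
    simp only [Set.mem_insert_iff, Set.mem_singleton_iff, Prod.mk.injEq, not_or]
    constructor
    · rintro ⟨h, -⟩; exact hA0.ne' h.symm
    · rintro ⟨-, h⟩; exact hA0.ne' h.symm
  have hne2 : ((A : ℝ), -A) ≠ (-A, A) := by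
    intro h
    rw [Prod.mk.injEq] at h
    have := h.1
    nlinarith
  rw [Set.ncard_insert_of_notMem hne1, Set.ncard_pair hne2]
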